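/- q-holonomic functions satisfy the elimination property (Theorem 7.2(b)): let f : ℤ^r → V be q-holonomic. Then for every pair of subsets I, J ⊆ {1,…,r} with |I| + |J| = r + 1, there exists a finitely supported family of coefficients c : ℕ^r × ℕ^r → R, not identically zero, with c(α,β) = 0 unless α is supported on I and β is supported on J, such that Σ_{(α,β)} c(α,β) q^{α·n} f(n+β) = 0 for all n ∈ ℤ^r. (Equivalently, f is strongly 𝒯_r-finite: for every subset 𝓛 of {M_1,…,M_r, L_1,…,L_r} with r+1 elements, f is annihilated by a nonzero element of the subalgebra of the quantum Weyl algebra generated by 𝓛; after normal ordering, such elements are exactly the sums Σ c(α,β) M^α L^β with α supported on I and β supported on J.) -/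

import Mathlib

open scoped BigOperators

noncomputable section

/-- The operator `M^α L^β` acting on functions `ℤ^r → V`:
`(M^α L^β f)(n) = q^(α·n) • f(n + β)`, where `q = X ∈ R = k(q) = RatFunc k`. -/
def shiftZ (k : Type) [Field k] {V : Type} [AddCommGroup V] [Module (RatFunc k) V]
    {r : ℕ} (α β : Fin r → ℕ) (f : (Fin r → ℤ) → V) : (Fin r → ℤ) → V :=
  fun n => ((RatFunc.X : RatFunc k) ^ (∑ i, (α i : ℤ) * n i)) • f (fun i => n i + (β i : ℤ))

/-- The subspace `F_m f` spanned by the `M^α L^β f` with `|α| + |β| ≤ m`. -/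
def FmZ (k : Type) [Field k] {V : Type} [AddCommGroup V] [Module (RatFunc k) V]
    {r : ℕ} (m : ℕ) (f : (Fin r → ℤ) → V) : Submodule (RatFunc k) ((Fin r → ℤ) → V) :=
  Submodule.span (RatFunc k)
    { g | ∃ α β : Fin r → ℕ, (∑ i, α i) + (∑ i, β i) ≤ m ∧ g = shiftZ k α β f }

/-- `f : ℤ^r → V` is q-holonomic if each `F_m f` is finite dimensional over `R = k(q)`
and there is a constant `C` with `dim_R F_m f ≤ C (m+1)^r` for all `m`. -/
def IsQHolonomicZ (k : Type) [Field k] {V : Type} [AddCommGroup V] [Module (RatFunc k) V]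
    {r : ℕ} (f : (Fin r → ℤ) → V) : Prop :=
  (∀ m : ℕ, FiniteDimensional (RatFunc k) (FmZ k m f)) ∧
  ∃ C : ℕ, ∀ m : ℕ, Module.finrank (RatFunc k) (FmZ k m f) ≤ C * (m + 1) ^ r

set_option maxHeartbeats 1000000 in
set_option synthInstance.maxHeartbeats 200000 in
/-- Theorem 7.2(b): a q-holonomic function is strongly `𝒯_r`-finite. For every pair of
subsets `I, J ⊆ {1,…,r}` with `|I| + |J| = r + 1` there is a nonzero finitely supported
family of coefficients `c(α,β) ∈ k(q)`, with `α` supported on `I` and `β` supported on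
`J`, such that `Σ_{(α,β)} c(α,β) q^{α·n} f(n+β) = 0` for all `n ∈ ℤ^r`. -/
theorem qholonomic_elimination (k : Type) [Field k] [CharZero k] {V : Type}
    [AddCommGroup V] [Module (RatFunc k) V] {r : ℕ} (hr : 1 ≤ r)
    (f : (Fin r → ℤ) → V) (hf : IsQHolonomicZ k f) :
    ∀ I J : Finset (Fin r), I.card + J.card = r + 1 →
      ∃ c : ((Fin r → ℕ) × (Fin r → ℕ)) →₀ RatFunc k,
        c ≠ 0 ∧
        (∀ p ∈ c.support, (∀ i, i ∉ I → p.1 i = 0) ∧ (∀ i, i ∉ J → p.2 i = 0)) ∧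
        ∀ n : Fin r → ℤ,
          (c.sum fun p a =>
            (a * (RatFunc.X : RatFunc k) ^ (∑ i, (p.1 i : ℤ) * n i)) •
              f (fun i => n i + (p.2 i : ℤ))) = 0 := by
  intro I J hIJ
  obtain ⟨C, hC⟩ := hf.2
  -- choose parameters
  set d : ℕ := C * (r + 1) ^ r with hd
  set m : ℕ := (r + 1) * d with hm
  -- the index type
  let ι : Type := ((↥I) → Fin (d + 1)) × ((↥J) → Fin (d + 1))
  -- the multi-indices
  let A : ι → (Fin r → ℕ) := fun x i => if h : i ∈ I then (x.1 ⟨i, h⟩ : ℕ) else 0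
  let B : ι → (Fin r → ℕ) := fun x i => if h : i ∈ J then (x.2 ⟨i, h⟩ : ℕ) else 0
  -- the degree bound
  have hAle : ∀ x : ι, (∑ i, A x i) ≤ I.card * d := by
    intro x
    have h1 : (∑ i, A x i) = ∑ i ∈ I, A x i := by
      rw [← Finset.sum_subset (Finset.subset_univ I)]
      intro i _ hi
      simp only [A, dif_neg hi]
    rw [h1]
    calc ∑ i ∈ I, A x i ≤ ∑ _i ∈ I, d := by
          apply Finset.sum_le_sum
          intro i hi
          simp only [A, dif_pos hi]
          exact Nat.lt_succ_iff.mp (x.1 ⟨i, hi⟩).isLt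
      _ = I.card * d := by rw [Finset.sum_const, smul_eq_mul]
  have hBle : ∀ x : ι, (∑ i, B x i) ≤ J.card * d := by
    intro x
    have h1 : (∑ i, B x i) = ∑ i ∈ J, B x i := by
      rw [← Finset.sum_subset (Finset.subset_univ J)]
      intro i _ hi
      simp only [B, dif_neg hi]
    rw [h1]
    calc ∑ i ∈ J, B x i ≤ ∑ _i ∈ J, d := by
          apply Finset.sum_le_sum
          intro i hi
          simp only [B, dif_pos hi]
          exact Nat.lt_succ_iff.mp (x.2 ⟨i, hi⟩).isLt
      _ = J.card * d := by rw [Finset.sum_const, smul_eq_mul]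
  have hdeg : ∀ x : ι, (∑ i, A x i) + (∑ i, B x i) ≤ m := by
    intro x
    calc (∑ i, A x i) + (∑ i, B x i) ≤ I.card * d + J.card * d :=
          Nat.add_le_add (hAle x) (hBle x)
      _ = (I.card + J.card) * d := (Nat.add_mul _ _ _).symm
      _ = m := by rw [hIJ, hm]
  -- the family of vectors in F_m f
  let v : ι → (FmZ k m f) := fun x =>
    ⟨shiftZ k (A x) (B x) f, Submodule.subset_span ⟨A x, B x, hdeg x, rfl⟩⟩
  -- cardinality comparison
  have hcard : Fintype.card ι = (d + 1) ^ (r + 1) := by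
    rw [Fintype.card_prod, Fintype.card_fun, Fintype.card_fun, Fintype.card_coe,
      Fintype.card_coe, Fintype.card_fin, ← pow_add, hIJ]
  have harith : C * (m + 1) ^ r < (d + 1) ^ (r + 1) := by
    calc C * (m + 1) ^ r ≤ C * ((r + 1) * (d + 1)) ^ r := by
          apply Nat.mul_le_mul_left
          apply Nat.pow_le_pow_left
          rw [hm]; ring_nf; omega
      _ = C * (r + 1) ^ r * (d + 1) ^ r := by rw [Nat.mul_pow]; ring
      _ = d * (d + 1) ^ r := by rw [hd]
      _ < (d + 1) * (d + 1) ^ r :=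
          Nat.mul_lt_mul_of_pos_right (Nat.lt_succ_self d) (Nat.pow_pos (n := r) (Nat.succ_pos d))
      _ = (d + 1) ^ (r + 1) := by rw [pow_succ]; ring
  -- the family cannot be linearly independent
  haveI := hf.1 m
  have hnli : ¬ LinearIndependent (RatFunc k) v := by
    intro hli
    have := hli.fintype_card_le_finrank
    rw [hcard] at this
    exact absurd (le_trans this (hC m)) (not_le.mpr harith)
  rw [Fintype.not_linearIndependent_iff] at hnli
  obtain ⟨g, hg0, i0, hi0⟩ := hnli
  -- the embedding into pairs of multi-indices
  have heinj : Function.Injective (fun x : ι => (A x, B x)) := by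
    intro x y hxy
    have h1 : A x = A y := congrArg Prod.fst hxy
    have h2 : B x = B y := congrArg Prod.snd hxy
    ext i
    · have := congrFun h1 (i : Fin r)
      simp only [A, dif_pos i.2] at this
      exact_mod_cast this
    · have := congrFun h2 (i : Fin r)
      simp only [B, dif_pos i.2] at this
      exact_mod_cast this
  let e : ι ↪ ((Fin r → ℕ) × (Fin r → ℕ)) := ⟨fun x => (A x, B x), heinj⟩
  refine ⟨Finsupp.embDomain e (Finsupp.equivFunOnFinite.symm g), ?_, ?_, ?_⟩
  · rw [Ne, Finsupp.embDomain_eq_zero]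
    intro h
    apply hi0
    have h2 : (Finsupp.equivFunOnFinite.symm g) i0 = 0 := by rw [h]; rfl
    simpa using h2
  · intro p hp
    rw [Finsupp.support_embDomain, Finset.mem_map] at hp
    obtain ⟨x, _, rfl⟩ := hp
    constructor
    · intro i hi; simp only [e, Function.Embedding.coeFn_mk, A, dif_neg hi]
    · intro i hi; simp only [e, Function.Embedding.coeFn_mk, B, dif_neg hi]
  · intro n
    rw [Finsupp.sum_embDomain]
    rw [Finsupp.sum_fintype]
    · have hsum2 : (∑ x : ι, g x • shiftZ k (A x) (B x) f) = 0 := by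
        have h0 := congrArg (Subtype.val) hg0
        rw [Submodule.coe_sum] at h0
        simp only [SetLike.val_smul, ZeroMemClass.coe_zero] at h0
        exact h0
      have := congrFun hsum2 n
      simp only [Finset.sum_apply, Pi.smul_apply, Pi.zero_apply] at this
      calc (∑ x : ι,
              ((Finsupp.equivFunOnFinite.symm g) x *
                  (RatFunc.X : RatFunc k) ^ (∑ i, ((e x).1 i : ℤ) * n i)) •
                f (fun i => n i + ((e x).2 i : ℤ)))
          = ∑ x : ι, g x • shiftZ k (A x) (B x) f n := by
            apply Finset.sum_congr rfl
            intro x _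
            rw [mul_smul]
            rfl
        _ = 0 := this
    · intro x
      rw [zero_mul, zero_smul]
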